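/- Let P be a comparison matrix for N = 2^n players with 0 < P_ij < 1 for all i ≠ j, let σ be a draw and i* a player. For each pair k < l let α_kl be the slope of the affine function t ↦ wp(i*, P[kl←t], σ), where P[kl←t] agrees with P except P_kl = t, P_lk = 1 − t. Then lim_{ε → 0+} ( wp(i*,P,σ) − wp_ε(i*,P,σ) ) / ε = Σ_{k < l} |α_kl|. -/

import Mathlib

/-- A perfect (balanced) binary tree of depth `n` with leaves labelled by `α`. -/
inductive BT (α : Type) : ℕ → Type
  | leaf : α → BT α 0
  | node {n : ℕ} : BT α n → BT α n → BT α (n + 1)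

namespace BT

/-- The list of leaf labels, from left to right. -/
def leaves {α : Type} : ∀ {n : ℕ}, BT α n → List α
  | _, .leaf a => [a]
  | _, .node L R => L.leaves ++ R.leaves

/-- Relabel the leaves of a tree. -/
def map {α β : Type} (f : α → β) : ∀ {n : ℕ}, BT α n → BT β n
  | _, .leaf a => .leaf (f a)
  | _, .node L R => .node (L.map f) (R.map f)

end BT

/-- Two trees represent the same draw iff one can be obtained from the other by
swapping the two children subtrees at internal nodes. -/
def BTequiv {α : Type} : ∀ {n : ℕ}, BT α n → BT α n → Prop
  | 0, .leaf a, .leaf b => a = b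
  | _ + 1, .node L R, .node L' R' =>
      (BTequiv L L' ∧ BTequiv R R') ∨ (BTequiv L R' ∧ BTequiv R L')

/-- A draw: each of the `N` players occurs exactly once among the leaves. -/
def IsDraw {N n : ℕ} (t : BT (Fin N) n) : Prop :=
  ∀ i : Fin N, t.leaves.count i = 1

/-- The winning distribution of a knockout tournament: `wd P t i` is the probability
that player `i` wins the (sub)tournament with draw `t` and comparison matrix `P`. -/
noncomputable def wd {N : ℕ} (P : Fin N → Fin N → ℝ) :
    ∀ {n : ℕ}, BT (Fin N) n → Fin N → ℝ
  | _, .leaf j => fun i => if i = j then 1 else 0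
  | _, .node L R => fun i =>
      wd P L i * (∑ j, wd P R j * P i j) + wd P R i * (∑ j, wd P L j * P i j)

/-- `P` is a comparison matrix. -/
def IsCompMatrix {N : ℕ} (P : Fin N → Fin N → ℝ) : Prop :=
  ∀ i j : Fin N, i ≠ j → 0 ≤ P i j ∧ P i j ≤ 1 ∧ P i j + P j i = 1

/-- `P` is deterministic: every off-diagonal entry is 0 or 1. -/
def IsDet {N : ℕ} (P : Fin N → Fin N → ℝ) : Prop :=
  ∀ i j : Fin N, i ≠ j → P i j = 0 ∨ P i j = 1

/-- The set `𝒫(P,ε)` of ε-perturbations of `P`. -/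
def perturbs {N : ℕ} (P : Fin N → Fin N → ℝ) (ε : ℝ) : Set (Fin N → Fin N → ℝ) :=
  {P' | IsCompMatrix P' ∧ ∀ i j : Fin N, i ≠ j → |P' i j - P i j| ≤ ε}

/-- The ε-guaranteed winning probability `wp_ε(i,P,σ)`. -/
noncomputable def wpe {N n : ℕ} (i : Fin N) (P : Fin N → Fin N → ℝ) (ε : ℝ)
    (t : BT (Fin N) n) : ℝ :=
  sInf ((fun P' => wd P' t i) '' perturbs P ε)

/-- The comparison matrix of the hard `n`-round tournament `H_n` (players 0-indexed):
for `i < j`, player `i` beats player `j` iff `i = j - 2 ^ v` where `2 ^ v` is the largest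
power of 2 dividing `j` (in 0-indexed numbering). -/
noncomputable def hardP (n : ℕ) : Fin (2 ^ n) → Fin (2 ^ n) → ℝ := fun i j =>
  if i = j then 0
  else if (i : ℕ) < (j : ℕ) then
    (if (i : ℕ) + 2 ^ padicValNat 2 (j : ℕ) = (j : ℕ) then 1 else 0)
  else
    (if (j : ℕ) + 2 ^ padicValNat 2 (i : ℕ) = (i : ℕ) then 0 else 1)

/-- The tree of depth `n` whose leaves are `s, s+1, …, s + 2^n - 1` from left to right. -/
def ordTree : (n : ℕ) → ℕ → BT ℕ n
  | 0, s => .leaf s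
  | n + 1, s => .node (ordTree n s) (ordTree n (s + 2 ^ n))

/-- The identity draw, placing players `0, 1, …, 2^n - 1` on the leaves in order. -/
def idDraw (n : ℕ) : BT (Fin (2 ^ n)) n :=
  (ordTree n 0).map (fun k => ⟨k % 2 ^ n, Nat.mod_lt _ (by positivity)⟩)

/-- `f_p(x,y) = p(x+y) + (1-2p)xy`. -/
def fp (p x y : ℝ) : ℝ := p * (x + y) + (1 - 2 * p) * x * y

/-- `B_p` on trees with real leaf labels. -/
noncomputable def Bp (p : ℝ) : ∀ {n : ℕ}, BT ℝ n → ℝ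
  | _, .leaf x => x
  | _, .node L R => fp p (Bp p L) (Bp p R)

/-- Group a list into consecutive pairs. -/
def pairList {α : Type} : List α → List (α × α)
  | a :: b :: rest => (a, b) :: pairList rest
  | _ => []

/-- The first-round matches of a draw: the consecutive sibling pairs of leaves. -/
def firstPairs {α : Type} {n : ℕ} (t : BT α n) : List (α × α) := pairList t.leaves

/-- A draw is mixed (w.r.t. the set `B` of big players) if every first-round match
pairs a big player with a small player. -/
def MixedDraw {N n : ℕ} (B : Finset (Fin N)) (t : BT (Fin N) n) : Prop :=
  ∀ q ∈ firstPairs t, ((q.1 ∈ B) ↔ q.2 ∉ B)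

/-- Number of leaves labelled `1`. -/
noncomputable def ones {n : ℕ} (t : BT ℝ n) : ℕ := t.leaves.count 1

/-- All leaf labels are `0` or `1`. -/
def ZeroOne {n : ℕ} (t : BT ℝ n) : Prop := ∀ x ∈ t.leaves, x = 0 ∨ x = 1

/-- `P[kl←t]`: the matrix agreeing with `P` except `P k l = t` and `P l k = 1 - t`. -/
def updPair {N : ℕ} (P : Fin N → Fin N → ℝ) (k l : Fin N) (t : ℝ) :
    Fin N → Fin N → ℝ :=
  fun i j => if i = k ∧ j = l then t else if i = l ∧ j = k then 1 - t else P i j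

/-- Perturb a deterministic matrix: for each pair `(w, l) ∈ S` (winner first),
set `P w l = 1 - ε` and `P l w = ε`; other entries unchanged. -/
def detPerturb {N : ℕ} (P : Fin N → Fin N → ℝ) (S : Finset (Fin N × Fin N)) (ε : ℝ) :
    Fin N → Fin N → ℝ :=
  fun i j => if (i, j) ∈ S then 1 - ε else if (j, i) ∈ S then ε else P i j

/-- Swap the result of the single match between `a` and `b`. -/
def swapPair {N : ℕ} (P : Fin N → Fin N → ℝ) (a b : Fin N) : Fin N → Fin N → ℝ :=
  fun i j => if i = a ∧ j = b then P b a else if i = b ∧ j = a then P a b else P i j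

/-- The pair `(a,b)` (with `a` the winner) is crucial for `i` in `C(P,σ)`. -/
def Crucial {N n : ℕ} (P : Fin N → Fin N → ℝ) (σ : BT (Fin N) n) (i : Fin N)
    (a b : Fin N) : Prop :=
  a ≠ b ∧ P a b = 1 ∧ wd (swapPair P a b) σ i = 0

set_option maxHeartbeats 800000

variable {N : ℕ}

lemma wd_zero (Q : Fin N → Fin N → ℝ) : ∀ {m : ℕ} (t : BT (Fin N) m) (i : Fin N),
    i ∉ t.leaves → wd Q t i = 0
  | _, .leaf j, i, h => by
      simp [BT.leaves, wd] at h ⊢; exact fun hij => absurd hij h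
  | _, .node L R, i, h => by
      simp [BT.leaves, List.mem_append] at h
      simp [wd, wd_zero Q L i h.1, wd_zero Q R i h.2]

lemma eval_contDiff (i j : Fin N) : ContDiff ℝ ⊤ (fun Q : Fin N → Fin N → ℝ => Q i j) := by
  fun_prop

lemma wd_contDiff : ∀ {m : ℕ} (t : BT (Fin N) m) (i : Fin N),
    ContDiff ℝ ⊤ (fun Q : Fin N → Fin N → ℝ => wd Q t i)
  | _, .leaf j, i => by simp [wd]; exact contDiff_const
  | _, .node L R, i => by
      simp only [wd]
      exact ((wd_contDiff L i).mul (ContDiff.sum fun j _ => (wd_contDiff R j).mul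
          (eval_contDiff i j))).add
        ((wd_contDiff R i).mul (ContDiff.sum fun j _ => (wd_contDiff L j).mul
          (eval_contDiff i j)))
set_option maxHeartbeats 1000000

open Filter

lemma taylor2 {E : Type} [NormedAddCommGroup E] [NormedSpace ℝ E]
    {F : E → ℝ} (hF : ContDiff ℝ ⊤ F) (P : E) :
    ∃ K : ℝ, 0 ≤ K ∧ ∃ ε₀ : ℝ, 0 < ε₀ ∧ ∀ Q : E, ‖Q - P‖ ≤ ε₀ →
      |F Q - F P - fderiv ℝ F P (Q - P)| ≤ K * ‖Q - P‖ ^ 2 := by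
  have hd : ContDiff ℝ 1 (fderiv ℝ F) := hF.fderiv_right (by exact le_top)
  obtain ⟨K, t, ht, hlip⟩ := hd.contDiffAt.exists_lipschitzOnWith (x := P)
  obtain ⟨ε₀, hε₀, hball⟩ := Metric.mem_nhds_iff.mp ht
  refine ⟨K, K.coe_nonneg, ε₀ / 2, by positivity, fun Q hQ => ?_⟩
  set r := ‖Q - P‖ with hr
  have hrε : r ≤ ε₀ / 2 := hQ
  have hsub : Metric.closedBall P r ⊆ t := fun x hx => hball (by
    simp only [Metric.mem_closedBall, Metric.mem_ball] at hx ⊢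
    linarith)
  set h : E → ℝ := fun x => F x - fderiv ℝ F P x with hh
  have hdiff : ∀ x ∈ Metric.closedBall P r, DifferentiableAt ℝ h x := fun x _ =>
    ((hF.differentiable (by simp)).differentiableAt).sub
      ((fderiv ℝ F P).differentiable.differentiableAt)
  have hbd : ∀ x ∈ Metric.closedBall P r, ‖fderiv ℝ h x‖ ≤ K * r := by
    intro x hx
    have : fderiv ℝ h x = fderiv ℝ F x - fderiv ℝ F P := by
      rw [hh]
      rw [fderiv_fun_sub ((hF.differentiable (by simp)).differentiableAt)
        ((fderiv ℝ F P).differentiable.differentiableAt), (fderiv ℝ F P).fderiv]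
    rw [this]
    have h2 : dist (fderiv ℝ F x) (fderiv ℝ F P) ≤ K * dist x P := by
      have := hlip.dist_le_mul x (hsub hx) P (hsub (Metric.mem_closedBall_self (norm_nonneg _)))
      exact this
    calc ‖fderiv ℝ F x - fderiv ℝ F P‖ = dist (fderiv ℝ F x) (fderiv ℝ F P) := (dist_eq_norm _ _).symm
      _ ≤ K * dist x P := h2
      _ ≤ K * r := by
          have : dist x P ≤ r := hx
          exact mul_le_mul_of_nonneg_left this K.coe_nonneg
  have key := Convex.norm_image_sub_le_of_norm_fderiv_le hdiff hbd (convex_closedBall P r)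
    (Metric.mem_closedBall_self (norm_nonneg _))
    (Metric.mem_closedBall.mpr (by rw [dist_eq_norm]))
  have : h Q - h P = F Q - F P - fderiv ℝ F P (Q - P) := by
    simp only [hh, map_sub]; ring
  calc |F Q - F P - fderiv ℝ F P (Q - P)| = ‖h Q - h P‖ := by rw [this, Real.norm_eq_abs]
    _ ≤ K * r * ‖Q - P‖ := key
    _ = K * ‖Q - P‖ ^ 2 := by rw [← hr]; ring
variable {N : ℕ}

lemma wd_offdiag_congr (Q Q' : Fin N → Fin N → ℝ)
    (h : ∀ i j : Fin N, i ≠ j → Q i j = Q' i j) :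
    ∀ {m : ℕ} (t : BT (Fin N) m), t.leaves.Nodup → ∀ i : Fin N, wd Q t i = wd Q' t i
  | _, .leaf j, _, i => by simp [wd]
  | _, .node L R, hnd, i => by
      rw [BT.leaves, List.nodup_append] at hnd
      obtain ⟨hL, hR, hdisj⟩ := hnd
      have IHL := wd_offdiag_congr Q Q' h L hL
      have IHR := wd_offdiag_congr Q Q' h R hR
      have key : ∀ {m1 m2 : ℕ} (A : BT (Fin N) m1) (B : BT (Fin N) m2), (∀ a ∈ A.leaves, a ∉ B.leaves) →
          wd Q' A i * (∑ j, wd Q' B j * Q i j) = wd Q' A i * (∑ j, wd Q' B j * Q' i j) := by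
        intro m1 m2 A B hAB
        by_cases hiA : i ∈ A.leaves
        · congr 1
          apply Finset.sum_congr rfl
          intro j _
          by_cases hij : i = j
          · subst hij
            rw [wd_zero Q' B i (hAB i hiA)]
            ring
          · rw [h i j hij]
        · rw [wd_zero Q' A i hiA]
          ring
      simp only [wd]
      simp only [IHL, IHR]
      congr 1
      · exact key L R (fun a ha hb => hdisj a ha a hb rfl)
      · exact key R L (fun a ha hb => hdisj a hb a ha rfl)
variable {N : ℕ}

/-- direction vector for a pair -/
def dirP (k l : Fin N) : Fin N → Fin N → ℝ := fun i j =>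
  if i = k ∧ j = l then 1 else if i = l ∧ j = k then -1 else 0

lemma updPair_eq_path (P : Fin N → Fin N → ℝ) (k l : Fin N) (hkl : k ≠ l)
    (hsum : P k l + P l k = 1) (t : ℝ) :
    updPair P k l t = P + (t - P k l) • dirP k l := by
  funext i j
  simp only [updPair, dirP, Pi.add_apply, Pi.smul_apply, smul_eq_mul]
  by_cases h1 : i = k ∧ j = l
  · obtain ⟨rfl, rfl⟩ := h1
    rw [if_pos ⟨rfl, rfl⟩, if_pos ⟨rfl, rfl⟩]
    ring
  · rw [if_neg h1, if_neg h1]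
    by_cases h2 : i = l ∧ j = k
    · obtain ⟨rfl, rfl⟩ := h2
      rw [if_pos ⟨rfl, rfl⟩, if_pos ⟨rfl, rfl⟩]
      have : P j i = 1 - P i j := by linarith
      rw [this]; ring
    · rw [if_neg h2, if_neg h2]; ring

lemma fderiv_dirP {m : ℕ} (σ : BT (Fin N) m) (istar : Fin N)
    (P : Fin N → Fin N → ℝ) (k l : Fin N) (hkl : k ≠ l)
    (hsum : P k l + P l k = 1) (h0 : 0 < P k l) (h1 : P k l < 1) (a β : ℝ)
    (haff : ∀ t ∈ Set.Icc (0:ℝ) 1, wd (updPair P k l t) σ istar = a * t + β) :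
    fderiv ℝ (fun Q => wd Q σ istar) P (dirP k l) = a := by
  set F := fun Q : Fin N → Fin N → ℝ => wd Q σ istar with hFdef
  set d := dirP k l with hd
  set c := P k l with hc
  set γ := fun t : ℝ => P + (t - c) • d with hγdef
  have hγc : γ c = P := by simp [hγdef]
  have hγ : HasDerivAt γ d c := by
    have h1' : HasDerivAt (fun t : ℝ => t - c) 1 c := (hasDerivAt_id c).sub_const c
    have h2 : HasDerivAt (fun t : ℝ => (t - c) • d) ((1:ℝ) • d) c := h1'.smul_const d
    simpa only [one_smul] using h2.const_add P
  have hFP : HasFDerivAt F (fderiv ℝ F P) (γ c) := by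
    rw [hγc]
    exact ((wd_contDiff σ istar).differentiable (by simp) P).hasFDerivAt
  have hg : HasDerivAt (fun t => F (γ t)) (fderiv ℝ F P d) c := hFP.comp_hasDerivAt c hγ
  have heq : (fun t => F (γ t)) =ᶠ[nhds c] (fun t => a * t + β) := by
    filter_upwards [isOpen_Ioo.mem_nhds (show c ∈ Set.Ioo (0:ℝ) 1 from ⟨h0, h1⟩)] with t ht
    rw [hFdef, hγdef]
    simp only
    rw [← updPair_eq_path P k l hkl hsum t]
    exact haff t (Set.mem_Icc.mpr ⟨le_of_lt ht.1, le_of_lt ht.2⟩)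
  have haff' : HasDerivAt (fun t : ℝ => a * t + β) a c := by
    simpa using ((hasDerivAt_id c).const_mul a).add_const β
  have hg2 : HasDerivAt (fun t => F (γ t)) a c := haff'.congr_of_eventuallyEq heq
  exact hg.unique hg2

lemma decomp_pairs (P Q : Fin N → Fin N → ℝ)
    (hP1 : ∀ k l : Fin N, k ≠ l → P k l + P l k = 1)
    (hQ1 : ∀ k l : Fin N, k ≠ l → Q k l + Q l k = 1)
    (hdiag : ∀ i, Q i i = P i i) :
    Q - P = ∑ q ∈ Finset.univ.filter (fun q : Fin N × Fin N => q.1 < q.2),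
      (Q q.1 q.2 - P q.1 q.2) • dirP q.1 q.2 := by
  funext i j
  rw [Pi.sub_apply, Pi.sub_apply]
  have happ : (∑ q ∈ Finset.univ.filter (fun q : Fin N × Fin N => q.1 < q.2),
      (Q q.1 q.2 - P q.1 q.2) • dirP q.1 q.2) i j
      = ∑ q ∈ Finset.univ.filter (fun q : Fin N × Fin N => q.1 < q.2),
      (Q q.1 q.2 - P q.1 q.2) * dirP q.1 q.2 i j := by
    rw [Finset.sum_apply, Finset.sum_apply]
    rfl
  rw [happ]
  rcases lt_trichotomy i j with hij | hij | hij
  · rw [Finset.sum_eq_single_of_mem (i, j) (by simp [hij])]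
    · simp [dirP]
    · intro q hq hne
      simp only [Finset.mem_filter] at hq
      have c1 : ¬ (i = q.1 ∧ j = q.2) := by
        intro h; exact hne (Prod.ext_iff.mpr ⟨h.1.symm, h.2.symm⟩)
      have c2 : ¬ (i = q.2 ∧ j = q.1) := by
        intro h; rw [← h.1, ← h.2] at hq; exact absurd hij (not_lt.mpr (le_of_lt hq.2))
      simp [dirP, c1, c2]
  · subst hij
    rw [Finset.sum_eq_zero, hdiag, sub_self]
    intro q hq
    simp only [Finset.mem_filter] at hq
    have hne : q.1 ≠ q.2 := ne_of_lt hq.2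
    have c1 : ¬ (i = q.1 ∧ i = q.2) := fun h => hne (h.1.symm.trans h.2)
    have c2 : ¬ (i = q.2 ∧ i = q.1) := fun h => hne (h.2.symm.trans h.1)
    simp [dirP, c1, c2]
  · rw [Finset.sum_eq_single_of_mem (j, i) (by simp [hij])]
    · have hne : j ≠ i := ne_of_lt hij
      have hij' : ¬ (i = j) := fun h => hne h.symm
      have hd : dirP j i i j = -1 := by simp [dirP, hij']
      rw [hd]
      have e1 := hQ1 j i hne
      have e2 := hP1 j i hne
      linarith
    · intro q hq hne
      simp only [Finset.mem_filter] at hq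
      have c1 : ¬ (i = q.1 ∧ j = q.2) := by
        rintro ⟨rfl, rfl⟩; exact absurd hij (not_lt.mpr (le_of_lt hq.2))
      have c2 : ¬ (i = q.2 ∧ j = q.1) := by
        rintro ⟨rfl, rfl⟩; exact hne rfl
      simp [dirP, c1, c2]
lemma minentry {N : ℕ} (P : Fin N → Fin N → ℝ) (hP : IsCompMatrix P)
    (hpos : ∀ i j : Fin N, i ≠ j → 0 < P i j ∧ P i j < 1) :
    ∃ c : ℝ, 0 < c ∧ ∀ i j : Fin N, i ≠ j → c ≤ P i j ∧ P i j ≤ 1 - c := by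
  by_cases hN : (Finset.univ.filter (fun p : Fin N × Fin N => p.1 ≠ p.2)).Nonempty
  · set s := Finset.univ.filter (fun p : Fin N × Fin N => p.1 ≠ p.2) with hs
    refine ⟨s.inf' hN (fun p => P p.1 p.2), ?_, ?_⟩
    · rw [Finset.lt_inf'_iff]
      intro p hp
      simp only [hs, Finset.mem_filter] at hp
      exact (hpos p.1 p.2 hp.2).1
    · intro i j hij
      constructor
      · have hm : ((i, j) : Fin N × Fin N) ∈ s := by simp [hs, hij]
        exact Finset.inf'_le _ hm
      · have hm : ((j, i) : Fin N × Fin N) ∈ s := by simp [hs, hij.symm]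
        have h1 : s.inf' hN (fun p => P p.1 p.2) ≤ P j i := Finset.inf'_le _ hm
        have h2 := (hP i j hij).2.2
        linarith
  · refine ⟨1, one_pos, fun i j hij => absurd ?_ hN⟩
    exact ⟨(i, j), by simp [hij]⟩

set_option maxHeartbeats 1600000


/-- for a comparison matrix with all entries strictly between 0 and 1,
the ε-worst drop is `Σ_{k<l} |α_kl| · ε` to first order, where `α_kl` is the slope
of the affine map `t ↦ wp(i*, P[kl←t], σ)`. -/
theorem prob_drop_first_order (n : ℕ)
    (P : Fin (2 ^ n) → Fin (2 ^ n) → ℝ) (hP : IsCompMatrix P)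
    (hpos : ∀ i j : Fin (2 ^ n), i ≠ j → 0 < P i j ∧ P i j < 1)
    (σ : BT (Fin (2 ^ n)) n) (hσ : IsDraw σ) (istar : Fin (2 ^ n))
    (α : Fin (2 ^ n) → Fin (2 ^ n) → ℝ)
    (hα : ∀ k l : Fin (2 ^ n), k < l → ∃ β : ℝ, ∀ t ∈ Set.Icc (0 : ℝ) 1,
      wd (updPair P k l t) σ istar = α k l * t + β) :
    Filter.Tendsto (fun ε : ℝ => (wd P σ istar - wpe istar P ε σ) / ε)
      (nhdsWithin 0 (Set.Ioi 0))
      (nhds (∑ q ∈ Finset.univ.filter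
        (fun q : Fin (2 ^ n) × Fin (2 ^ n) => q.1 < q.2), |α q.1 q.2|)) := by
  set F := fun Q : Fin (2 ^ n) → Fin (2 ^ n) → ℝ => wd Q σ istar with hFdef
  set pairs := Finset.univ.filter (fun q : Fin (2 ^ n) × Fin (2 ^ n) => q.1 < q.2) with hpairs
  set S := ∑ q ∈ pairs, |α q.1 q.2| with hSdef
  have hS0 : 0 ≤ S := Finset.sum_nonneg fun q _ => abs_nonneg _
  have hnd : σ.leaves.Nodup :=
    List.nodup_iff_count_le_one.mpr fun i => le_of_eq (hσ i)
  obtain ⟨K, hK0, ε₀, hε₀, hTay⟩ := taylor2 (wd_contDiff σ istar) P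
  obtain ⟨c, hc0, hc⟩ := minentry P hP hpos
  set ε₂ := min ε₀ c with hε₂def
  have hε₂ : 0 < ε₂ := lt_min hε₀ hc0
  -- derivative in pair directions
  have hder : ∀ q ∈ pairs, fderiv ℝ F P (dirP q.1 q.2) = α q.1 q.2 := by
    intro q hq
    simp only [hpairs, Finset.mem_filter] at hq
    obtain ⟨β, haff⟩ := hα q.1 q.2 hq.2
    have hne : q.1 ≠ q.2 := ne_of_lt hq.2
    exact fderiv_dirP σ istar P q.1 q.2 hne (hP q.1 q.2 hne).2.2
      (hpos q.1 q.2 hne).1 (hpos q.1 q.2 hne).2 (α q.1 q.2) β haff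
  have hsgn : ∀ x : ℝ, Real.sign x * x = |x| := by
    intro x
    rcases lt_trichotomy x 0 with h | h | h
    · rw [Real.sign_of_neg h, abs_of_neg h]; ring
    · simp [h]
    · rw [Real.sign_of_pos h, abs_of_pos h]; ring
  have hsgn1 : ∀ x : ℝ, |Real.sign x| ≤ 1 := by
    intro x
    rcases lt_trichotomy x 0 with h | h | h
    · rw [Real.sign_of_neg h]; simp
    · simp [h]
    · rw [Real.sign_of_pos h]; simp
  have key : ∀ ε : ℝ, 0 < ε → ε ≤ ε₂ →
      wd P σ istar - ε * S - K * ε ^ 2 ≤ wpe istar P ε σ ∧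
      wpe istar P ε σ ≤ wd P σ istar - ε * S + K * ε ^ 2 := by
    intro ε hε hεle
    have hεε₀ : ε ≤ ε₀ := le_trans hεle (min_le_left _ _)
    have hεc : ε ≤ c := le_trans hεle (min_le_right _ _)
    -- generic Taylor estimate for matrices agreeing with P on the diagonal
    have hgen : ∀ Q : Fin (2 ^ n) → Fin (2 ^ n) → ℝ,
        (∀ k l : Fin (2 ^ n), k ≠ l → Q k l + Q l k = 1) → (∀ i, Q i i = P i i) →
        (∀ i j : Fin (2 ^ n), i ≠ j → |Q i j - P i j| ≤ ε) →
        |F Q - F P - ∑ q ∈ pairs, (Q q.1 q.2 - P q.1 q.2) * α q.1 q.2| ≤ K * ε ^ 2 := by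
      intro Q hQ1 hQd hQε
      have hnorm : ‖Q - P‖ ≤ ε := by
        rw [pi_norm_le_iff_of_nonneg hε.le]
        intro i
        rw [pi_norm_le_iff_of_nonneg hε.le]
        intro j
        rw [Pi.sub_apply, Pi.sub_apply, Real.norm_eq_abs]
        by_cases hij : i = j
        · subst hij; rw [hQd]; simpa using hε.le
        · exact hQε i j hij
      have hfder : fderiv ℝ F P (Q - P)
          = ∑ q ∈ pairs, (Q q.1 q.2 - P q.1 q.2) * α q.1 q.2 := by
        rw [decomp_pairs P Q (fun k l h => (hP k l h).2.2) hQ1 hQd, map_sum]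
        exact Finset.sum_congr rfl fun q hq => by
          rw [map_smul, hder q hq, smul_eq_mul]
      calc |F Q - F P - ∑ q ∈ pairs, (Q q.1 q.2 - P q.1 q.2) * α q.1 q.2|
          = |F Q - F P - fderiv ℝ F P (Q - P)| := by rw [hfder]
        _ ≤ K * ‖Q - P‖ ^ 2 := hTay Q (le_trans hnorm hεε₀)
        _ ≤ K * ε ^ 2 := by
            apply mul_le_mul_of_nonneg_left _ hK0
            exact pow_le_pow_left₀ (norm_nonneg _) hnorm 2
    -- lower bound on all members of the perturbation set
    have hlow : ∀ Q ∈ perturbs P ε, wd P σ istar - ε * S - K * ε ^ 2 ≤ F Q := by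
      rintro Q ⟨hQc, hQε⟩
      set Qh := fun i j : Fin (2 ^ n) => if i = j then P i j else Q i j with hQh
      have hFeq : F Q = F Qh :=
        wd_offdiag_congr Q Qh (fun i j hij => by simp [hQh, hij]) σ hnd istar
      have hb := hgen Qh
        (fun k l h => by
          simp only [hQh, if_neg h, if_neg (Ne.symm h)]
          exact (hQc k l h).2.2)
        (fun i => by simp [hQh])
        (fun i j hij => by simpa [hQh, hij] using hQε i j hij)
      have hsum : -(ε * S) ≤ ∑ q ∈ pairs, (Qh q.1 q.2 - P q.1 q.2) * α q.1 q.2 := by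
        have h1 : -(ε * S) = ∑ q ∈ pairs, -(ε * |α q.1 q.2|) := by
          rw [hSdef, Finset.mul_sum, ← Finset.sum_neg_distrib]
        rw [h1]
        apply Finset.sum_le_sum
        intro q hq
        simp only [hpairs, Finset.mem_filter] at hq
        have hne : q.1 ≠ q.2 := ne_of_lt hq.2
        have h2 : |(Qh q.1 q.2 - P q.1 q.2) * α q.1 q.2| ≤ ε * |α q.1 q.2| := by
          rw [abs_mul]
          apply mul_le_mul_of_nonneg_right _ (abs_nonneg _)
          simpa [hQh, hne] using hQε q.1 q.2 hne
        have h3 := neg_abs_le ((Qh q.1 q.2 - P q.1 q.2) * α q.1 q.2)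
        linarith
      have habs := abs_le.mp hb
      rw [hFeq]
      simp only [hFdef] at habs ⊢
      linarith
    have hne_im : ((fun P' => wd P' σ istar) '' perturbs P ε).Nonempty :=
      ⟨wd P σ istar, P, ⟨hP, fun i j _ => by simpa using hε.le⟩, rfl⟩
    have hbdd : BddBelow ((fun P' => wd P' σ istar) '' perturbs P ε) := by
      refine ⟨wd P σ istar - ε * S - K * ε ^ 2, ?_⟩
      rintro y ⟨Q, hQ, rfl⟩
      exact hlow Q hQ
    constructor
    · exact le_csInf hne_im (by rintro y ⟨Q, hQ, rfl⟩; exact hlow Q hQ)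
    · -- upper bound: explicit worst perturbation
      set Qε := fun i j : Fin (2 ^ n) =>
        if i = j then P i j
        else if i < j then P i j - ε * Real.sign (α i j)
        else P i j + ε * Real.sign (α j i) with hQε
      have hQεd : ∀ i, Qε i i = P i i := fun i => by simp [hQε]
      have hQεoff : ∀ i j : Fin (2 ^ n), i ≠ j → |Qε i j - P i j| ≤ ε := by
        intro i j hij
        rcases lt_or_gt_of_ne hij with h | h
        · simp only [hQε, if_neg hij, if_pos h]
          rw [sub_sub_cancel_left, abs_neg, abs_mul, abs_of_pos hε]
          calc ε * |Real.sign (α i j)| ≤ ε * 1 :=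
              mul_le_mul_of_nonneg_left (hsgn1 _) hε.le
            _ = ε := mul_one ε
        · simp only [hQε, if_neg hij, if_neg (not_lt.mpr h.le)]
          rw [add_sub_cancel_left, abs_mul, abs_of_pos hε]
          calc ε * |Real.sign (α j i)| ≤ ε * 1 :=
              mul_le_mul_of_nonneg_left (hsgn1 _) hε.le
            _ = ε := mul_one ε
      have hQε1 : ∀ k l : Fin (2 ^ n), k ≠ l → Qε k l + Qε l k = 1 := by
        intro k l h
        rcases lt_or_gt_of_ne h with hlt | hlt
        · simp only [hQε, if_neg h, if_neg (Ne.symm h), if_pos hlt,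
            if_neg (not_lt.mpr hlt.le)]
          have := (hP k l h).2.2
          ring_nf
          linarith
        · simp only [hQε, if_neg h, if_neg (Ne.symm h), if_pos hlt,
            if_neg (not_lt.mpr hlt.le)]
          have := (hP k l h).2.2
          ring_nf
          linarith
      have hQεmem : Qε ∈ perturbs P ε := by
        refine ⟨fun i j hij => ?_, fun i j hij => hQεoff i j hij⟩
        have h1 := hQεoff i j hij
        have h2 := hc i j hij
        have h3 := abs_le.mp h1
        refine ⟨by linarith, by linarith, hQε1 i j hij⟩
      have hsum : ∑ q ∈ pairs, (Qε q.1 q.2 - P q.1 q.2) * α q.1 q.2 = -(ε * S) := by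
        rw [hSdef, Finset.mul_sum, ← Finset.sum_neg_distrib]
        apply Finset.sum_congr rfl
        intro q hq
        simp only [hpairs, Finset.mem_filter] at hq
        have hne : q.1 ≠ q.2 := ne_of_lt hq.2
        simp only [hQε, if_neg hne, if_pos hq.2]
        rw [sub_sub_cancel_left]
        rw [← hsgn (α q.1 q.2)]
        ring
      have hb := hgen Qε hQε1 hQεd hQεoff
      rw [hsum] at hb
      have habs := abs_le.mp hb
      have hFQε : F Qε ≤ wd P σ istar - ε * S + K * ε ^ 2 := by
        simp only [hFdef] at habs ⊢
        linarith
      calc wpe istar P ε σ ≤ F Qε := csInf_le hbdd ⟨Qε, hQεmem, rfl⟩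
        _ ≤ wd P σ istar - ε * S + K * ε ^ 2 := hFQε
  -- squeeze
  have hmem : Set.Ioo (0:ℝ) ε₂ ∈ nhdsWithin (0:ℝ) (Set.Ioi 0) :=
    Ioo_mem_nhdsGT_of_mem ⟨le_refl 0, hε₂⟩
  have hup : ∀ᶠ ε in nhdsWithin (0:ℝ) (Set.Ioi 0),
      (wd P σ istar - wpe istar P ε σ) / ε ≤ S + K * ε := by
    filter_upwards [hmem] with ε hε
    have hk := (key ε hε.1 hε.2.le).1
    rw [div_le_iff₀ hε.1]
    nlinarith [hε.1]
  have hlo : ∀ᶠ ε in nhdsWithin (0:ℝ) (Set.Ioi 0),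
      S - K * ε ≤ (wd P σ istar - wpe istar P ε σ) / ε := by
    filter_upwards [hmem] with ε hε
    have hk := (key ε hε.1 hε.2.le).2
    rw [le_div_iff₀ hε.1]
    nlinarith [hε.1]
  have t1 : Filter.Tendsto (fun ε : ℝ => S - K * ε) (nhdsWithin (0:ℝ) (Set.Ioi 0)) (nhds S) := by
    have : Filter.Tendsto (fun ε : ℝ => S - K * ε) (nhds 0) (nhds (S - K * 0)) :=
      (continuous_const.sub (continuous_const.mul continuous_id)).tendsto 0
    simpa using this.mono_left nhdsWithin_le_nhds
  have t2 : Filter.Tendsto (fun ε : ℝ => S + K * ε) (nhdsWithin (0:ℝ) (Set.Ioi 0)) (nhds S) := by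
    have : Filter.Tendsto (fun ε : ℝ => S + K * ε) (nhds 0) (nhds (S + K * 0)) :=
      (continuous_const.add (continuous_const.mul continuous_id)).tendsto 0
    simpa using this.mono_left nhdsWithin_le_nhds
  exact tendsto_of_tendsto_of_tendsto_of_le_of_le' t1 t2 hlo hup
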